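/- The map [P,Q] from decorated trees to synchronized intervals is injective: if P(T1) = P(T2) and Q(T1) = Q(T2) for decorated trees T1, T2, then T1 = T2. -/

import Mathlib

/-- A Dyck word: `true` is an up step `u`, `false` is a down step `d`. -/
def IsDyck (w : List Bool) : Prop :=
  w.count true = w.count false ∧ ∀ k, (w.take k).count false ≤ (w.take k).count true

/-- Position (0-based index) of the `i`-th (1-based) up step of `w`. -/
noncomputable def upPos (w : List Bool) (i : ℕ) : ℕ :=
  sInf {j | w.getD j false = true ∧ (w.take (j + 1)).count true = i}

/-- Position of the down step matching the up step at position `k`: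
the first later down step such that the letters strictly in between form a Dyck word. -/
noncomputable def matchIdx (w : List Bool) (k : ℕ) : ℕ :=
  sInf {m | k < m ∧ w.getD m true = false ∧ IsDyck ((w.drop (k + 1)).take (m - (k + 1)))}

/-- The distance function `D_w(i)`: number of letters between the `i`-th up step and its
matching down step, plus one. -/
noncomputable def distFn (w : List Bool) (i : ℕ) : ℕ :=
  matchIdx w (upPos w i) - upPos w i

/-- One rotation step of the Tamari order on Dyck words: a factor `d · B` (with `B` a
nonempty Dyck word) is replaced by `B · d`. -/
def TamariStep (P Q : List Bool) : Prop :=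
  ∃ A B C : List Bool, IsDyck B ∧ B ≠ [] ∧
    P = A ++ false :: (B ++ C) ∧ Q = A ++ (B ++ false :: C)

/-- The Tamari order on Dyck words: reflexive-transitive closure of rotation steps. -/
def TamariLe : List Bool → List Bool → Prop := Relation.ReflTransGen TamariStep
/-- The type of a Dyck word `w` of size `n`: the word of length `n - 1` over `{N, E}`
(encoded with `true = E`, `false = N`) whose `k`-th letter is `E` iff the letter following
the `k`-th up step of `w` is an up step. -/
noncomputable def typeWord (w : List Bool) : List Bool :=
  (List.range (w.count true - 1)).map (fun k => w.getD (upPos w (k + 1) + 1) false)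

/-- A synchronized interval: a pair of Dyck words of the same size, comparable in the
Tamari order, and with the same type. -/
def Sync (P Q : List Bool) : Prop :=
  IsDyck P ∧ IsDyck Q ∧ P.length = Q.length ∧ TamariLe P Q ∧ typeWord P = typeWord Q
/-- A rooted plane tree whose leaves carry integer labels. -/
inductive PTree : Type where
  | leaf : ℤ → PTree
  | node : List PTree → PTree

/-- The labels of the leaves of a tree, in (counterclockwise) traversal order. -/
def leavesOf : PTree → List ℤ
  | .leaf a => [a]
  | .node [] => []
  | .node (c :: cs) => leavesOf c ++ leavesOf (.node cs)

/-- The number of edges of a tree (internal and external), the root being a node. -/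
def numEdges : PTree → ℕ
  | .leaf _ => 0
  | .node [] => 0
  | .node (c :: cs) => 1 + numEdges c + numEdges (.node cs)

/-- The number of non-root internal nodes of a tree. -/
def internalCount : PTree → ℕ
  | .leaf _ => 0
  | .node [] => 0
  | .node (c :: cs) =>
      (match c with | .node _ => 1 | .leaf _ => 0) + internalCount c + internalCount (.node cs)

/-- The three conditions of decorated trees, for a subtree rooted at depth `d`:
(1) a leaf whose parent has depth `p` has label `≥ -1` and `< p`;
(2) every internal node of depth `d > 0` has a descendant leaf with label `≤ d - 2`;
(3) if a leaf of a subtree rooted at a child of a node of depth `d` has label `d`, then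
all leaves of that subtree preceding it in traversal order have labels `≥ d`. -/
def Cond : PTree → ℕ → Prop
  | .leaf a, d => -1 ≤ a ∧ a + 1 < (d : ℤ)
  | .node cs, d =>
      (0 < d → ∃ a ∈ leavesOf (.node cs), a ≤ (d : ℤ) - 2) ∧
      (∀ c ∈ cs, ∀ i j : ℕ, i < j → j < (leavesOf c).length →
        (leavesOf c).getD j 0 = (d : ℤ) → (d : ℤ) ≤ (leavesOf c).getD i 0) ∧
      (∀ c ∈ cs, Cond c (d + 1))

/-- A decorated tree: a rooted plane tree (rooted at an internal node) with integer
labels on leaves satisfying the three conditions. -/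
def IsDecorated (T : PTree) : Prop :=
  (∃ cs, T = PTree.node cs) ∧ Cond T 0

mutual
/-- The list of charges of the leaves of a subtree rooted at depth `d`, in traversal
order: every leaf starts with charge `0`, and each internal node of depth `d > 0` adds
one charge to its first descendant leaf with label `≤ d - 2`. -/
def chargeList : PTree → ℕ → List ℕ
  | .leaf _, _ => [0]
  | .node cs, d =>
      let base := chargeConcat cs (d + 1)
      if d = 0 then base
      else
        let i := (leavesOf (.node cs)).findIdx (fun a => decide (a ≤ (d : ℤ) - 2))
        base.set i (base.getD i 0 + 1)

/-- Charges of a forest of subtrees, all rooted at depth `d`. -/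
def chargeConcat : List PTree → ℕ → List ℕ
  | [], _ => []
  | c :: cs, d => chargeList c d ++ chargeConcat cs d
end

/-- Builds the lower path `P(T)` by traversal, consuming the list of leaf charges:
each edge contributes an up step `u = true` when first visited, and a leaf of charge `k`
contributes `u·d^(1+k)`. Returns the word and the unconsumed charges. -/
def buildP : PTree → List ℕ → List Bool × List ℕ
  | .leaf _, ks => (List.replicate (ks.headD 0 + 1) false, ks.tail)
  | .node [], ks => ([], ks)
  | .node (c :: cs), ks =>
      let r1 := buildP c ks
      let r2 := buildP (.node cs) r1.2
      (true :: (r1.1 ++ r2.1), r2.2)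

/-- The lower Dyck path `P(T)` of a decorated tree, via the charge construction. -/
def Pword (T : PTree) : List Bool := (buildP T (chargeList T 0)).1

/-- The upper Dyck path `Q(T)`: the depth evolution of the traversal of `T`
(`true` = down an edge, `false` = up an edge). -/
def Qword : PTree → List Bool
  | .leaf _ => []
  | .node [] => []
  | .node (c :: cs) => (true :: (Qword c ++ [false])) ++ Qword (.node cs)

/-- shape equality -/
inductive SS : PTree → PTree → Prop
  | leaf (a b : ℤ) : SS (.leaf a) (.leaf b)
  | nil : SS (.node []) (.node [])
  | cons {c c' : PTree} {cs cs' : List PTree} :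
      SS c c' → SS (.node cs) (.node cs') → SS (.node (c :: cs)) (.node (c' :: cs'))

inductive Proper : PTree → Prop
  | leaf (a : ℤ) : Proper (.leaf a)
  | node (cs : List PTree) (h : cs ≠ []) (hc : ∀ c ∈ cs, Proper c) : Proper (.node cs)

theorem proper_of_cond : ∀ (T : PTree) (d : ℕ), 1 ≤ d → Cond T d → Proper T
  | .leaf a, _, _, _ => .leaf a
  | .node cs, d, hd, hC => by
      simp only [Cond] at hC
      obtain ⟨h1, -, h3⟩ := hC
      refine .node cs ?_ (fun c hc => proper_of_cond c (d+1) (by omega) (h3 c hc))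
      rcases h1 (by omega) with ⟨a, ha, -⟩
      rintro rfl
      simp [leavesOf] at ha
termination_by T => sizeOf T

theorem dyck_nil : IsDyck [] := by constructor <;> simp [IsDyck]

theorem dyck_append {A B : List Bool} (hA : IsDyck A) (hB : IsDyck B) : IsDyck (A ++ B) := by
  obtain ⟨hA1, hA2⟩ := hA; obtain ⟨hB1, hB2⟩ := hB
  constructor
  · simp [List.count_append, hA1, hB1]
  · intro k
    rw [List.take_append]
    simp only [List.count_append]
    exact Nat.add_le_add (hA2 k) (hB2 _)

theorem dyck_bracket {w : List Bool} (hw : IsDyck w) : IsDyck (true :: (w ++ [false])) := by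
  obtain ⟨h1, h2⟩ := hw
  constructor
  · simp [List.count_append, List.count_cons, h1]
  · intro k
    cases k with
    | zero => simp
    | succ k =>
      simp only [List.take_succ_cons, List.count_cons]
      rw [List.take_append]
      simp only [List.count_append]
      have h3 := h2 k
      have h4 : (List.take (k - w.length) [false]).count false ≤ 1 ∧
          (List.take (k - w.length) [false]).count true = 0 := by
        rcases Nat.eq_zero_or_pos (k - w.length) with h | h
        · simp [h]
        · have : List.take (k - w.length) [false] = [false] := by
            apply List.take_of_length_le; simp only [List.length_singleton]; omega
          simp [this]
      simp; omega

theorem dyck_split {A B X Y : List Bool} (hA : IsDyck A) (hB : IsDyck B)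
    (h : A ++ false :: X = B ++ false :: Y) : A = B ∧ X = Y := by
  have key : ∀ A B X Y : List Bool, IsDyck A → IsDyck B →
      A ++ false :: X = B ++ false :: Y → A.length < B.length → False := by
    intro A B X Y hA hB h hl
    have e1 : (A ++ false :: X).take (A.length+1) = A ++ [false] := by
      rw [List.take_append, List.take_of_length_le (by omega)]
      congr 1
      have h5 : A.length + 1 - A.length = 1 := by omega
      rw [h5]; rfl
    have e2 : (B ++ false :: Y).take (A.length+1) = B.take (A.length+1) := by
      rw [List.take_append]
      have h5 : A.length + 1 - B.length = 0 := by omega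
      rw [h5]; simp
    have hc := hB.2 (A.length+1)
    rw [← e2, ← h, e1] at hc
    have hcf : (A ++ [false]).count false = A.count false + 1 := by
      simp [List.count_append]
    have hct : (A ++ [false]).count true = A.count true := by
      simp [List.count_append]
    have := hA.1
    have h6 : (A.take (A.length+1)).count false ≤ (A.take (A.length+1)).count true := hA.2 _
    omega
  rcases Nat.lt_trichotomy A.length B.length with hl | hl | hl
  · exact (key A B X Y hA hB h hl).elim
  · obtain ⟨h1, h2⟩ := List.append_inj h hl
    exact ⟨h1, by simpa using h2⟩
  · exact (key B A Y X hB hA h.symm hl).elim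
theorem dyck_Qword : ∀ (T : PTree), Proper T → IsDyck (Qword T)
  | .leaf _, _ => by rw [Qword]; exact dyck_nil
  | .node [], _ => by rw [Qword]; exact dyck_nil
  | .node (c :: cs), hp => by
      have hp' : ∀ x ∈ c :: cs, Proper x := by cases hp with | node _ _ hc => exact hc
      have h1 : IsDyck (Qword c) := dyck_Qword c (hp' c (by simp))
      have h2 : IsDyck (Qword (.node cs)) := by
        cases cs with
        | nil => rw [Qword]; exact dyck_nil
        | cons c' cs' =>
          exact dyck_Qword (.node (c' :: cs')) (.node _ (by simp) (fun x hx => hp' x (by simp [hx])))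
      rw [Qword]
      exact dyck_append (dyck_bracket h1) h2
termination_by T => sizeOf T

theorem Q_inj : ∀ (T1 T2 : PTree), Proper T1 → Proper T2 → Qword T1 = Qword T2 → SS T1 T2
  | .leaf a, .leaf b, _, _, _ => .leaf a b
  | .leaf a, .node cs, _, hp, h => by
      cases hp with
      | node _ hne hc =>
        cases cs with
        | nil => exact absurd rfl hne
        | cons c cs' => rw [Qword, Qword] at h; simp at h
  | .node cs, .leaf b, hp, _, h => by
      cases hp with
      | node _ hne hc =>
        cases cs with
        | nil => exact absurd rfl hne
        | cons c cs' => rw [Qword, Qword] at h; simp at h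
  | .node [], .node [], _, _, _ => .nil
  | .node [], .node (c :: cs), _, _, h => by rw [Qword, Qword] at h; simp at h
  | .node (c :: cs), .node [], _, _, h => by rw [Qword, Qword] at h; simp at h
  | .node (c1 :: cs1), .node (c2 :: cs2), hp1, hp2, h => by
      have hp1' : ∀ x ∈ c1 :: cs1, Proper x := by cases hp1 with | node _ _ hc => exact hc
      have hp2' : ∀ x ∈ c2 :: cs2, Proper x := by cases hp2 with | node _ _ hc => exact hc
      rw [Qword, Qword] at h
      simp only [List.cons_append, List.cons.injEq, true_and] at h
      have h' : Qword c1 ++ false :: Qword (.node cs1) = Qword c2 ++ false :: Qword (.node cs2) := by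
        simpa [List.append_assoc] using h
      obtain ⟨hq, hr⟩ := dyck_split (dyck_Qword c1 (hp1' c1 (by simp)))
        (dyck_Qword c2 (hp2' c2 (by simp))) h'
      have s1 : SS c1 c2 := Q_inj c1 c2 (hp1' c1 (by simp)) (hp2' c2 (by simp)) hq
      cases cs1 with
      | nil =>
        cases cs2 with
        | nil => exact .cons s1 .nil
        | cons y ys => rw [Qword, Qword] at hr; simp at hr
      | cons x xs =>
        cases cs2 with
        | nil => rw [Qword, Qword] at hr; simp at hr
        | cons y ys =>
          have s2 := Q_inj (.node (x :: xs)) (.node (y :: ys))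
            (.node _ (by simp) (fun z hz => hp1' z (by simp [hz])))
            (.node _ (by simp) (fun z hz => hp2' z (by simp [hz]))) hr
          exact .cons s1 s2
termination_by T1 => sizeOf T1
def leafCount (T : PTree) : ℕ := (leavesOf T).length

theorem leavesOf_node_cons (c : PTree) (cs : List PTree) :
    leavesOf (.node (c :: cs)) = leavesOf c ++ leavesOf (.node cs) := by rw [leavesOf]

theorem leafCount_node_cons (c : PTree) (cs : List PTree) :
    leafCount (.node (c :: cs)) = leafCount c + leafCount (.node cs) := by
  simp [leafCount, leavesOf_node_cons]

mutual
def linfoT : PTree → ℕ → List (List ℕ × ℤ)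
  | .leaf a, _ => [([], a)]
  | .node cs, o => linfoF cs o

def linfoF : List PTree → ℕ → List (List ℕ × ℤ)
  | [], _ => []
  | c :: cs, o => (linfoT c o).map (fun p => (o :: p.1, p.2)) ++ linfoF cs (o + leafCount c)
end

mutual
theorem len_linfoT : ∀ (T : PTree) (o : ℕ), (linfoT T o).length = leafCount T
  | .leaf a, o => by simp [linfoT, leafCount, leavesOf]
  | .node cs, o => by
      rw [linfoT, len_linfoF]
theorem len_linfoF : ∀ (cs : List PTree) (o : ℕ),
    (linfoF cs o).length = leafCount (.node cs)
  | [], o => by simp [linfoF, leafCount, leavesOf]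
  | c :: cs, o => by
      rw [linfoF]
      simp [len_linfoT c, len_linfoF cs, leafCount_node_cons]
end

mutual
theorem snd_linfoT : ∀ (T : PTree) (o : ℕ), (linfoT T o).map Prod.snd = leavesOf T
  | .leaf a, o => by simp [linfoT, leavesOf]
  | .node cs, o => by rw [linfoT, snd_linfoF]
theorem snd_linfoF : ∀ (cs : List PTree) (o : ℕ),
    (linfoF cs o).map Prod.snd = leavesOf (.node cs)
  | [], o => by simp [linfoF, leavesOf]
  | c :: cs, o => by
      rw [linfoF, leavesOf_node_cons]
      rw [List.map_append, List.map_map]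
      rw [show (Prod.snd ∘ fun p : List ℕ × ℤ => (o :: p.1, p.2)) = Prod.snd from rfl]
      rw [snd_linfoT, snd_linfoF]
end

theorem SS.leafCount_eq : ∀ {T1 T2 : PTree}, SS T1 T2 → leafCount T1 = leafCount T2 := by
  intro T1 T2 h
  induction h with
  | leaf a b => simp [leafCount, leavesOf]
  | nil => rfl
  | cons h1 h2 ih1 ih2 => rw [leafCount_node_cons, leafCount_node_cons, ih1, ih2]

theorem SS.linfo_fst : ∀ {T1 T2 : PTree}, SS T1 T2 → ∀ o,
    (linfoT T1 o).map Prod.fst = (linfoT T2 o).map Prod.fst := by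
  intro T1 T2 h
  induction h with
  | leaf a b => intro o; simp [linfoT]
  | nil => intro o; simp [linfoT, linfoF]
  | @cons c c' cs cs' h1 h2 ih1 ih2 =>
      intro o
      rw [linfoT, linfoT, linfoF, linfoF]
      simp only [List.map_append, List.map_map]
      rw [h1.leafCount_eq]
      congr 1
      · rw [show (Prod.fst ∘ fun p : List ℕ × ℤ => (o :: p.1, p.2)) =
            (fun l => o :: l) ∘ Prod.fst from rfl]
        rw [← List.map_map, ← List.map_map, ih1 o]
      · have e2 := ih2 (o + leafCount c')
        rw [linfoT, linfoT] at e2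
        exact e2

/-- same shape and same leaves implies equal -/
theorem SS.eq_of_leaves : ∀ {T1 T2 : PTree}, SS T1 T2 →
    leavesOf T1 = leavesOf T2 → T1 = T2 := by
  intro T1 T2 h
  induction h with
  | leaf a b => intro h; rw [leavesOf, leavesOf] at h; simp at h; rw [h]
  | nil => intro _; rfl
  | cons h1 h2 ih1 ih2 =>
      intro h
      rw [leavesOf_node_cons, leavesOf_node_cons] at h
      obtain ⟨e1, e2⟩ := List.append_inj h h1.leafCount_eq
      have := ih1 e1
      have := ih2 e2
      simp_all
mutual
theorem len_chargeList : ∀ (T : PTree) (d : ℕ), (chargeList T d).length = leafCount T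
  | .leaf a, d => by simp [chargeList, leafCount, leavesOf]
  | .node cs, d => by
      rw [chargeList]
      have h := len_chargeConcat cs (d+1)
      split <;> simp [h]
theorem len_chargeConcat : ∀ (cs : List PTree) (d : ℕ),
    (chargeConcat cs d).length = leafCount (.node cs)
  | [], d => by simp [chargeConcat, leafCount, leavesOf]
  | c :: cs, d => by
      rw [chargeConcat]
      simp [len_chargeList c, len_chargeConcat cs, leafCount_node_cons]
end

theorem buildP_snd : ∀ (T : PTree) (ks : List ℕ), (buildP T ks).2 = ks.drop (leafCount T)
  | .leaf a, ks => by simp [buildP, leafCount, leavesOf, List.drop_one]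
  | .node [], ks => by simp [buildP, leafCount, leavesOf]
  | .node (c :: cs), ks => by
      rw [buildP]
      simp only []
      rw [buildP_snd (.node cs), buildP_snd c, List.drop_drop, leafCount_node_cons]
termination_by T => sizeOf T

def headOK (r : List Bool) : Prop := r.head? ≠ some false

theorem headOK_nil : headOK [] := by simp [headOK]

theorem headOK_buildP_node (cs : List PTree) (ks : List ℕ) {r : List Bool} (h : headOK r) :
    headOK ((buildP (.node cs) ks).1 ++ r) := by
  cases cs with
  | nil => rw [buildP]; simpa
  | cons c cs' => rw [buildP]; simp [headOK]

theorem repl_false_inj : ∀ (k1 k2 : ℕ) (r1 r2 : List Bool), headOK r1 → headOK r2 →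
    List.replicate k1 false ++ r1 = List.replicate k2 false ++ r2 → k1 = k2 ∧ r1 = r2 := by
  intro k1
  induction k1 with
  | zero =>
    intro k2 r1 r2 h1 h2 h
    cases k2 with
    | zero => simpa using h
    | succ k2 =>
      simp only [List.replicate_succ, List.replicate_zero, List.nil_append] at h
      rw [h] at h1
      simp [headOK] at h1
  | succ k1 ih =>
    intro k2 r1 r2 h1 h2 h
    cases k2 with
    | zero =>
      simp only [List.replicate_succ, List.replicate_zero, List.nil_append] at h
      rw [← h] at h2
      simp [headOK] at h2
    | succ k2 =>
      simp only [List.replicate_succ, List.cons_append, List.cons.injEq, true_and] at h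
      obtain ⟨e1, e2⟩ := ih k2 r1 r2 h1 h2 h
      exact ⟨by omega, e2⟩

theorem buildP_inj : ∀ {T1 T2 : PTree}, SS T1 T2 →
    ∀ (ks1 ks2 : List ℕ) (r1 r2 : List Bool),
    leafCount T1 ≤ ks1.length → leafCount T2 ≤ ks2.length → headOK r1 → headOK r2 →
    (buildP T1 ks1).1 ++ r1 = (buildP T2 ks2).1 ++ r2 →
    ks1.take (leafCount T1) = ks2.take (leafCount T2) ∧ r1 = r2 := by
  intro T1 T2 h
  induction h with
  | leaf a b =>
    intro ks1 ks2 r1 r2 hl1 hl2 h1 h2 h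
    rw [buildP, buildP] at h
    have e := repl_false_inj _ _ _ _ h1 h2 h
    have hc1 : leafCount (PTree.leaf a) = 1 := by simp [leafCount, leavesOf]
    rw [hc1]
    cases ks1 with
    | nil => simp [leafCount, leavesOf] at hl1
    | cons x xs =>
      cases ks2 with
      | nil => simp [leafCount, leavesOf] at hl2
      | cons y ys =>
        simp only [List.headD_cons] at e
        refine ⟨?_, e.2⟩
        simp [leafCount, leavesOf]
        omega
  | nil =>
    intro ks1 ks2 r1 r2 _ _ _ _ h
    rw [buildP, buildP] at h
    exact ⟨by simp [leafCount, leavesOf], by simpa using h⟩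
  | @cons c c' cs cs' hc hcs ih1 ih2 =>
    intro ks1 ks2 r1 r2 hl1 hl2 h1 h2 h
    rw [buildP, buildP] at h
    simp only [List.cons_append, List.cons.injEq, true_and, List.append_assoc] at h
    rw [buildP_snd, buildP_snd] at h
    have hok1 : headOK ((buildP (.node cs) (ks1.drop (leafCount c))).1 ++ r1) :=
      headOK_buildP_node _ _ h1
    have hok2 : headOK ((buildP (.node cs') (ks2.drop (leafCount c'))).1 ++ r2) :=
      headOK_buildP_node _ _ h2
    have hln : leafCount (PTree.node (c :: cs)) = leafCount c + leafCount (.node cs) :=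
      leafCount_node_cons c cs
    have hln' : leafCount (PTree.node (c' :: cs')) = leafCount c' + leafCount (.node cs') :=
      leafCount_node_cons c' cs'
    obtain ⟨e1, e2⟩ := ih1 ks1 ks2 _ _ (by omega) (by omega) hok1 hok2 h
    obtain ⟨e3, e4⟩ := ih2 (ks1.drop (leafCount c)) (ks2.drop (leafCount c'))
      r1 r2 (by simp; omega) (by simp; omega) h1 h2 e2
    refine ⟨?_, e4⟩
    rw [hln, hln', List.take_add, List.take_add, e1, e3]
def specP (lbl : ℕ → ℤ) (d j : ℕ) (P : List ℕ) (m : ℤ) (e : ℕ) : Bool :=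
  decide (1 ≤ d + e) && decide (m + 2 ≤ (d : ℤ) + e) &&
    decide (∀ i, i < j → P.getD e 0 ≤ i → (d : ℤ) + e - 1 ≤ lbl i)

def specC (lbl : ℕ → ℤ) (d j : ℕ) (P : List ℕ) (m : ℤ) : ℕ :=
  (List.range (P.length - 1)).countP (specP lbl d j P m)

theorem specC_nil_fst (lbl : ℕ → ℤ) (d j : ℕ) (o : ℕ) (m : ℤ) :
    specC lbl d j [o] m = 0 := by
  simp [specC]

theorem specC_cons (lbl : ℕ → ℤ) (d j o : ℕ) (S : List ℕ) (m : ℤ) (hS : S ≠ []) :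
    specC lbl d j (o :: S) m =
      specC lbl (d+1) j S m +
      (if 1 ≤ d ∧ m + 2 ≤ (d : ℤ) ∧ (∀ i, i < j → o ≤ i → (d : ℤ) - 1 ≤ lbl i)
        then 1 else 0) := by
  obtain ⟨s0, S', rfl⟩ : ∃ s0 S', S = s0 :: S' := by
    cases S with
    | nil => exact absurd rfl hS
    | cons a l => exact ⟨a, l, rfl⟩
  show (List.range (S'.length + 1)).countP _ = (List.range S'.length).countP _ + _
  rw [List.range_succ_eq_map, List.countP_cons, List.countP_map]
  congr 1
  · apply List.countP_congr
    intro e _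
    show specP lbl d j (o :: s0 :: S') m (e + 1) = true ↔
      specP lbl (d+1) j (s0 :: S') m e = true
    simp only [specP, List.getD_cons_succ, Bool.and_eq_true, decide_eq_true_eq]
    constructor
    · rintro ⟨⟨h1, h2⟩, h3⟩
      refine ⟨⟨by omega, by push_cast at h2 ⊢; omega⟩, fun i hi hoi => ?_⟩
      have := h3 i hi hoi; push_cast at this ⊢; omega
    · rintro ⟨⟨h1, h2⟩, h3⟩
      refine ⟨⟨by omega, by push_cast at h2 ⊢; omega⟩, fun i hi hoi => ?_⟩
      have := h3 i hi hoi; push_cast at this ⊢; omega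
  · have hiff : (specP lbl d j (o :: s0 :: S') m 0 = true) ↔
        (1 ≤ d ∧ m + 2 ≤ (d:ℤ) ∧ ∀ i, i < j → o ≤ i → (d:ℤ) - 1 ≤ lbl i) := by
      simp only [specP, List.getD_cons_zero, Bool.and_eq_true, decide_eq_true_eq]
      constructor
      · rintro ⟨⟨h1, h2⟩, h3⟩
        refine ⟨by omega, by push_cast at h2 ⊢; omega, fun i hi hoi => ?_⟩
        have := h3 i hi hoi; push_cast at this ⊢; omega
      · rintro ⟨h1, h2, h3⟩
        refine ⟨⟨by omega, by push_cast; omega⟩, fun i hi hoi => ?_⟩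
        have := h3 i hi hoi; push_cast; omega
    by_cases h : 1 ≤ d ∧ m + 2 ≤ (d:ℤ) ∧ ∀ i, i < j → o ≤ i → (d:ℤ) - 1 ≤ lbl i
    · rw [if_pos h, if_pos (hiff.mpr h)]
    · rw [if_neg h, if_neg (fun hh => h (hiff.mp hh))]
theorem findIdx_getD {α : Type*} {p : α → Bool} {l : List α} (dflt : α)
    (h : l.findIdx p < l.length) : p (l.getD (l.findIdx p) dflt) = true := by
  rw [List.getD_eq_getElem _ _ h]; exact List.findIdx_getElem

theorem findIdx_eq_getD {α : Type*} {p : α → Bool} {l : List α} {i : ℕ} (dflt : α)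
    (h : i < l.length) :
    l.findIdx p = i ↔ p (l.getD i dflt) = true ∧ ∀ k, k < i → p (l.getD k dflt) = false := by
  rw [List.findIdx_eq h]
  constructor
  · rintro ⟨h1, h2⟩
    exact ⟨by rwa [List.getD_eq_getElem _ _ h], fun k hk => by
      rw [List.getD_eq_getElem _ _ (by omega)]; exact h2 k hk⟩
  · rintro ⟨h1, h2⟩
    exact ⟨by rwa [List.getD_eq_getElem _ _ h] at h1, fun k hk => by
      have := h2 k hk; rwa [List.getD_eq_getElem _ _ (by omega)] at this⟩

theorem not_of_lt_findIdx_getD {α : Type*} {p : α → Bool} {l : List α} {i : ℕ} (dflt : α)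
    (h : i < l.findIdx p) (hl : i < l.length) : p (l.getD i dflt) = false := by
  rw [List.getD_eq_getElem _ _ hl]
  simpa using List.not_of_lt_findIdx h
theorem chargeList_node0 (cs : List PTree) :
    chargeList (.node cs) 0 = chargeConcat cs 1 := by rw [chargeList]; simp

theorem chargeList_node (cs : List PTree) (d : ℕ) (hd : d ≠ 0) :
    chargeList (.node cs) d = (chargeConcat cs (d+1)).set
      ((leavesOf (.node cs)).findIdx (fun a => decide (a ≤ (d:ℤ)-2)))
      ((chargeConcat cs (d+1)).getD
        ((leavesOf (.node cs)).findIdx (fun a => decide (a ≤ (d:ℤ)-2))) 0 + 1) := by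
  rw [chargeList]; simp [hd]

theorem linfoF_getD_head (c : PTree) (cs : List PTree) (o j : ℕ) (hj : j < leafCount c) :
    (linfoF (c :: cs) o).getD j ([],0) =
      (o :: ((linfoT c o).getD j ([],0)).1, ((linfoT c o).getD j ([],0)).2) := by
  rw [linfoF]
  have hl : j < ((linfoT c o).map (fun p => (o :: p.1, p.2))).length := by
    rw [List.length_map, len_linfoT]; exact hj
  rw [List.getD_append _ _ _ _ hl, List.getD_eq_getElem _ _ hl, List.getElem_map,
    List.getD_eq_getElem _ _ (by rw [len_linfoT]; exact hj)]

theorem linfoF_getD_tail (c : PTree) (cs : List PTree) (o j : ℕ) (hj : leafCount c ≤ j) :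
    (linfoF (c :: cs) o).getD j ([],0) =
      (linfoF cs (o + leafCount c)).getD (j - leafCount c) ([],0) := by
  rw [linfoF]
  rw [List.getD_append_right _ _ _ _ (by rw [List.length_map, len_linfoT]; exact hj)]
  rw [List.length_map, len_linfoT]

theorem fst_linfoF_ne : ∀ (cs : List PTree) (o j : ℕ), j < leafCount (.node cs) →
    ((linfoF cs o).getD j ([],0)).1 ≠ []
  | [], o, j, hj => by simp [leafCount, leavesOf] at hj
  | c :: cs, o, j, hj => by
      by_cases hjc : j < leafCount c
      · rw [linfoF_getD_head c cs o j hjc]; simp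
      · rw [linfoF_getD_tail c cs o j (by omega)]
        exact fst_linfoF_ne cs (o + leafCount c) (j - leafCount c)
          (by rw [leafCount_node_cons] at hj; omega)

theorem snd_entry (T : PTree) (o j : ℕ) (hj : j < leafCount T) :
    ((linfoT T o).getD j ([],0)).2 = (leavesOf T).getD j 0 := by
  have hl : j < (linfoT T o).length := by rw [len_linfoT]; exact hj
  have hs := snd_linfoT T o
  have hl2 : j < (leavesOf T).length := hj
  rw [List.getD_eq_getElem _ _ hl, List.getD_eq_getElem _ _ hl2]
  rw [← List.getElem_map (f := Prod.snd) (h := by simpa using hl)]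
  exact List.getElem_of_eq hs _

mutual
theorem chargeList_spec : ∀ (T : PTree) (d o : ℕ) (lbl : ℕ → ℤ),
    (∀ i, i < leafCount T → lbl (o + i) = (leavesOf T).getD i 0) →
    ∀ j, j < leafCount T →
    (chargeList T d).getD j 0 =
      specC lbl d (o + j) (o :: ((linfoT T o).getD j ([],0)).1) (((linfoT T o).getD j ([],0)).2)
  | .leaf a, d, o, lbl, hm, j, hj => by
      have hj1 : j = 0 := by simp [leafCount, leavesOf] at hj; omega
      subst hj1
      rw [chargeList, show linfoT (.leaf a) o = [([], a)] from by rw [linfoT]]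
      simp [specC_nil_fst]
  | .node cs, d, o, lbl, hm, j, hj => by
      have hbase := chargeConcat_spec cs (d+1) o lbl hm j hj
      have hTF : linfoT (.node cs) o = linfoF cs o := by rw [linfoT]
      rw [hTF]
      have hSne : ((linfoF cs o).getD j ([],0)).1 ≠ [] := fst_linfoF_ne cs o j hj
      rw [specC_cons lbl d (o+j) o _ _ hSne]
      have hm2 : ((linfoF cs o).getD j ([],0)).2 = (leavesOf (.node cs)).getD j 0 := by
        rw [← hTF]; exact snd_entry _ o j hj
      have hlen : (chargeConcat cs (d+1)).length = leafCount (.node cs) :=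
        len_chargeConcat cs (d+1)
      by_cases hd : d = 0
      · subst hd
        rw [chargeList_node0, hbase, if_neg (by rintro ⟨h, -⟩; omega)]
        omega
      · rw [chargeList_node cs d hd]
        by_cases hji : j = (leavesOf (.node cs)).findIdx (fun a => decide (a ≤ (d:ℤ)-2))
        · subst hji
          set j := (leavesOf (.node cs)).findIdx (fun a => decide (a ≤ (d:ℤ)-2)) with hidef
          have hjl : j < (chargeConcat cs (d+1)).length := by rw [hlen]; exact hj
          rw [List.getD_eq_getElem _ _ (by simpa using hjl), List.getElem_set_self]
          have hcond : 1 ≤ d ∧ ((linfoF cs o).getD j ([],0)).2 + 2 ≤ (d:ℤ) ∧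
              ∀ i, i < o + j → o ≤ i → (d:ℤ) - 1 ≤ lbl i := by
            refine ⟨by omega, ?_, ?_⟩
            · have hp := findIdx_getD (p := fun a => decide (a ≤ (d:ℤ)-2))
                (l := leavesOf (.node cs)) 0 (by rw [← hidef]; exact hj)
              rw [← hidef] at hp
              simp only [decide_eq_true_eq] at hp
              rw [hm2]
              omega
            · intro i' hi' hoi'
              have ht : i' - o < j := by omega
              have hlt : i' - o < leafCount (.node cs) := by omega
              have heq := hm (i' - o) hlt
              rw [show o + (i' - o) = i' from by omega] at heq
              rw [heq]
              have hnp := not_of_lt_findIdx_getD (p := fun a => decide (a ≤ (d:ℤ)-2))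
                (l := leavesOf (.node cs)) 0 (by rw [← hidef]; exact ht) hlt
              simp only [decide_eq_false_iff_not, not_le] at hnp
              omega
          rw [hbase, if_pos hcond]
        · have hjl : j < (chargeConcat cs (d+1)).length := by rw [hlen]; exact hj
          rw [List.getD_eq_getElem _ _ (by simpa using hjl)]
          rw [List.getElem_set_ne (by omega)]
          rw [← List.getD_eq_getElem _ _ hjl]
          have hcond : ¬(1 ≤ d ∧ ((linfoF cs o).getD j ([],0)).2 + 2 ≤ (d:ℤ) ∧
              ∀ i, i < o + j → o ≤ i → (d:ℤ) - 1 ≤ lbl i) := by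
            rintro ⟨h1, h2, h3⟩
            refine hji ?_
            refine ((findIdx_eq_getD (p := fun a => decide (a ≤ (d:ℤ)-2))
              (l := leavesOf (.node cs)) 0 (show j < (leavesOf (.node cs)).length from hj)).2
              ⟨?_, ?_⟩).symm
            · simp only [decide_eq_true_eq]
              rw [← hm2]
              omega
            · intro k hk
              have hk2 := h3 (o + k) (by omega) (by omega)
              rw [hm k (by omega)] at hk2
              simp only [decide_eq_false_iff_not, not_le]
              omega
          rw [hbase, if_neg hcond]
          omega
theorem chargeConcat_spec : ∀ (cs : List PTree) (d o : ℕ) (lbl : ℕ → ℤ),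
    (∀ i, i < leafCount (.node cs) → lbl (o + i) = (leavesOf (.node cs)).getD i 0) →
    ∀ j, j < leafCount (.node cs) →
    (chargeConcat cs d).getD j 0 =
      specC lbl d (o + j) (((linfoF cs o).getD j ([],0)).1) (((linfoF cs o).getD j ([],0)).2)
  | [], d, o, lbl, hm, j, hj => by simp [leafCount, leavesOf] at hj
  | c :: cs, d, o, lbl, hm, j, hj => by
      rw [chargeConcat]
      have hlc : (chargeList c d).length = leafCount c := len_chargeList c d
      rw [leafCount_node_cons] at hj
      by_cases hjc : j < leafCount c
      · rw [List.getD_append _ _ _ _ (by rw [hlc]; exact hjc)]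
        rw [linfoF_getD_head c cs o j hjc]
        exact chargeList_spec c d o lbl (fun i hi => by
          have h2 := hm i (by rw [leafCount_node_cons]; omega)
          rw [h2, leavesOf_node_cons, List.getD_append _ _ _ _ hi]) j hjc
      · rw [List.getD_append_right _ _ _ _ (by rw [hlc]; omega), hlc]
        rw [linfoF_getD_tail c cs o j (by omega)]
        have hm' : ∀ i, i < leafCount (.node cs) →
            lbl (o + leafCount c + i) = (leavesOf (.node cs)).getD i 0 := by
          intro i hi
          have h2 := hm (leafCount c + i) (by rw [leafCount_node_cons]; omega)
          rw [show o + (leafCount c + i) = o + leafCount c + i from by omega] at h2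
          rw [h2, leavesOf_node_cons,
            List.getD_append_right _ _ _ _ (by simp only [leafCount]; omega)]
          congr 1
          simp only [leafCount]
          omega
        have hrec := chargeConcat_spec cs d (o + leafCount c) lbl hm' (j - leafCount c)
          (by omega)
        rw [show o + leafCount c + (j - leafCount c) = o + j from by omega] at hrec
        exact hrec
end
mutual
theorem estar_T : ∀ (T : PTree) (d o : ℕ) (lbl : ℕ → ℤ),
    (∀ i, i < leafCount T → lbl (o + i) = (leavesOf T).getD i 0) →
    Cond T d →
    ∀ j, j < leafCount T → ∀ e : ℕ,
    (leavesOf T).getD j 0 = (d : ℤ) + e →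
    ∀ i, ((linfoT T o).getD j ([],0)).1.getD e 0 ≤ i → i < o + j → (d : ℤ) + e ≤ lbl i
  | .leaf a, d, o, lbl, hm, hC, j, hj, e, hlab, i, h1, h2 => by
      have hj0 : j = 0 := by simp [leafCount, leavesOf] at hj; omega
      subst hj0
      rw [show leavesOf (.leaf a) = [a] from by rw [leavesOf]] at hlab
      simp only [List.getD_cons_zero] at hlab
      simp only [Cond] at hC
      omega
  | .node cs, d, o, lbl, hm, hC, j, hj, e, hlab, i, h1, h2 => by
      simp only [Cond] at hC
      obtain ⟨-, hC3, hCc⟩ := hC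
      have hTF : linfoT (.node cs) o = linfoF cs o := by rw [linfoT]
      rw [hTF] at h1
      exact estar_F cs d o lbl hm hCc hC3 j hj e hlab i h1 h2

theorem estar_F : ∀ (cs : List PTree) (dp o : ℕ) (lbl : ℕ → ℤ),
    (∀ i, i < leafCount (.node cs) → lbl (o + i) = (leavesOf (.node cs)).getD i 0) →
    (∀ c ∈ cs, Cond c (dp+1)) →
    (∀ c ∈ cs, ∀ i j : ℕ, i < j → j < (leavesOf c).length →
        (leavesOf c).getD j 0 = (dp : ℤ) → (dp : ℤ) ≤ (leavesOf c).getD i 0) →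
    ∀ j, j < leafCount (.node cs) → ∀ e : ℕ,
    (leavesOf (.node cs)).getD j 0 = (dp : ℤ) + e →
    ∀ i, ((linfoF cs o).getD j ([],0)).1.getD e 0 ≤ i → i < o + j → (dp : ℤ) + e ≤ lbl i
  | [], dp, o, lbl, hm, hCc, hC3, j, hj, e, hlab, i, h1, h2 => by
      simp [leafCount, leavesOf] at hj
  | c :: cs, dp, o, lbl, hm, hCc, hC3, j, hj, e, hlab, i, h1, h2 => by
      rw [leafCount_node_cons] at hj
      have hlcc : leafCount c = (leavesOf c).length := rfl
      by_cases hjc : j < leafCount c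
      · rw [linfoF_getD_head c cs o j hjc] at h1
        have hlab' : (leavesOf c).getD j 0 = (dp : ℤ) + e := by
          rw [leavesOf_node_cons, List.getD_append _ _ _ _ (by omega)] at hlab
          exact hlab
        have hm' : ∀ i', i' < leafCount c → lbl (o + i') = (leavesOf c).getD i' 0 := by
          intro i' hi'
          have h2' := hm i' (by rw [leafCount_node_cons]; omega)
          rw [h2', leavesOf_node_cons, List.getD_append _ _ _ _ (by omega)]
        cases e with
        | zero =>
          simp only [List.getD_cons_zero] at h1
          have ht : i - o < j := by omega
          have h3 := hC3 c (by simp) (i - o) j ht (by omega) (by simpa using hlab')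
          have heq := hm' (i - o) (by omega)
          rw [show o + (i - o) = i from by omega] at heq
          rw [heq]
          simpa using h3
        | succ e =>
          simp only [List.getD_cons_succ] at h1
          have hres := estar_T c (dp+1) o lbl hm' (hCc c (by simp)) j hjc e
            (by push_cast at hlab' ⊢; linarith) i h1 h2
          push_cast at hres ⊢
          linarith
      · rw [linfoF_getD_tail c cs o j (by omega)] at h1
        have hlab' : (leavesOf (.node cs)).getD (j - leafCount c) 0 = (dp : ℤ) + e := by
          rw [leavesOf_node_cons, List.getD_append_right _ _ _ _ (by omega)] at hlab
          rw [show j - (leavesOf c).length = j - leafCount c from by omega] at hlab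
          exact hlab
        have hm'' : ∀ i', i' < leafCount (.node cs) →
            lbl (o + leafCount c + i') = (leavesOf (.node cs)).getD i' 0 := by
          intro i' hi'
          have h2' := hm (leafCount c + i') (by rw [leafCount_node_cons]; omega)
          rw [show o + (leafCount c + i') = o + leafCount c + i' from by omega] at h2'
          rw [h2', leavesOf_node_cons, List.getD_append_right _ _ _ _ (by omega)]
          congr 1
          omega
        exact estar_F cs dp (o + leafCount c) lbl hm'' (fun x hx => hCc x (by simp [hx]))
          (fun x hx => hC3 x (by simp [hx])) (j - leafCount c) (by omega) e hlab' i h1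
          (by omega)
end

mutual
theorem bound_T : ∀ (T : PTree) (d o : ℕ), Cond T d → ∀ j, j < leafCount T →
    -1 ≤ (leavesOf T).getD j 0 ∧
    (leavesOf T).getD j 0 + 2 ≤ (d : ℤ) + ((linfoT T o).getD j ([],0)).1.length
  | .leaf a, d, o, hC, j, hj => by
      have hj0 : j = 0 := by simp [leafCount, leavesOf] at hj; omega
      subst hj0
      simp only [Cond] at hC
      rw [show leavesOf (.leaf a) = [a] from by rw [leavesOf],
        show linfoT (.leaf a) o = [([], a)] from by rw [linfoT]]
      simp only [List.getD_cons_zero, List.length_nil]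
      omega
  | .node cs, d, o, hC, j, hj => by
      simp only [Cond] at hC
      rw [show linfoT (.node cs) o = linfoF cs o from by rw [linfoT]]
      exact bound_F cs d o hC.2.2 j hj

theorem bound_F : ∀ (cs : List PTree) (dp o : ℕ), (∀ c ∈ cs, Cond c (dp+1)) →
    ∀ j, j < leafCount (.node cs) →
    -1 ≤ (leavesOf (.node cs)).getD j 0 ∧
    (leavesOf (.node cs)).getD j 0 + 2 ≤ (dp : ℤ) + ((linfoF cs o).getD j ([],0)).1.length
  | [], dp, o, hCc, j, hj => by simp [leafCount, leavesOf] at hj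
  | c :: cs, dp, o, hCc, j, hj => by
      rw [leafCount_node_cons] at hj
      have hlcc : leafCount c = (leavesOf c).length := rfl
      by_cases hjc : j < leafCount c
      · rw [linfoF_getD_head c cs o j hjc, leavesOf_node_cons,
          List.getD_append _ _ _ _ (by omega)]
        have := bound_T c (dp+1) o (hCc c (by simp)) j hjc
        simp only [List.length_cons]
        push_cast at this ⊢
        omega
      · rw [linfoF_getD_tail c cs o j (by omega), leavesOf_node_cons,
          List.getD_append_right _ _ _ _ (by omega),
          show j - (leavesOf c).length = j - leafCount c from by omega]
        exact bound_F cs dp (o + leafCount c) (fun x hx => hCc x (by simp [hx]))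
          (j - leafCount c) (by omega)
end

theorem countP_imp_all {l : List ℕ} {p q : ℕ → Bool} (himp : ∀ x ∈ l, q x = true → p x = true)
    (hc : l.countP p ≤ l.countP q) : ∀ x ∈ l, p x = true → q x = true := by
  induction l with
  | nil => simp
  | cons a l ih =>
    have himp' : ∀ x ∈ l, q x = true → p x = true := fun x hx => himp x (by simp [hx])
    have hmono : l.countP q ≤ l.countP p := List.countP_mono_left himp'
    rw [List.countP_cons, List.countP_cons] at hc
    intro x hx hpx
    rcases List.mem_cons.1 hx with rfl | hx'
    · by_contra hqx
      have hq0 : q x = false := by simpa using hqx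
      rw [hpx, hq0] at hc
      simp at hc
      omega
    · refine ih himp' ?_ x hx' hpx
      have hpq := himp a (by simp)
      rcases Bool.eq_false_or_eq_true (p a) with hpa | hpa <;>
        rcases Bool.eq_false_or_eq_true (q a) with hqa | hqa
      · simp [hpa, hqa] at hc; omega
      · simp [hpa, hqa] at hc; omega
      · rw [hpq hqa] at hpa; simp at hpa
      · simp [hpa, hqa] at hc; omega
theorem specC_congr (lbl lbl' : ℕ → ℤ) (d j : ℕ) (P : List ℕ) (m : ℤ)
    (h : ∀ i, i < j → lbl i = lbl' i) :
    specC lbl d j P m = specC lbl' d j P m := by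
  unfold specC
  apply List.countP_congr
  intro e _
  simp only [specP, Bool.and_eq_true, decide_eq_true_eq]
  constructor
  · rintro ⟨h1, h2⟩
    exact ⟨h1, fun i hi hpi => by rw [← h i hi]; exact h2 i hi hpi⟩
  · rintro ⟨h1, h2⟩
    exact ⟨h1, fun i hi hpi => by rw [h i hi]; exact h2 i hi hpi⟩

theorem key (TB : PTree) (hCB : Cond TB 0) (j : ℕ) (hj : j < leafCount TB)
    (S : List ℕ) (hSent : ((linfoT TB 0).getD j ([],0)).1 = S)
    (lblA : ℕ → ℤ) (hAB : ∀ i, i < j → lblA i = (leavesOf TB).getD i 0)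
    (mA : ℤ) (hmA : -1 ≤ mA) (hlt : mA < (leavesOf TB).getD j 0)
    (hspec : specC lblA 0 j (0 :: S) mA =
      specC lblA 0 j (0 :: S) ((leavesOf TB).getD j 0)) : False := by
  set mB := (leavesOf TB).getD j 0 with hmB
  have hb := bound_T TB 0 0 hCB j hj
  rw [hSent] at hb
  have hSlen : mB + 2 ≤ (S.length : ℤ) := by
    have := hb.2
    push_cast at this
    omega
  have hmB0 : 0 ≤ mB := by omega
  set e0 : ℕ := (mB + 1).toNat with he0
  have he0' : (e0 : ℤ) = mB + 1 := by omega
  have he0lt : e0 < S.length := by omega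
  have himp : ∀ x ∈ List.range S.length, specP lblA 0 j (0::S) mB x = true →
      specP lblA 0 j (0::S) mA x = true := by
    intro x _ hx
    simp only [specP, Bool.and_eq_true, decide_eq_true_eq] at hx ⊢
    refine ⟨⟨hx.1.1, ?_⟩, hx.2⟩
    have := hx.1.2
    omega
  have hcnt : (List.range S.length).countP (specP lblA 0 j (0::S) mA) ≤
      (List.range S.length).countP (specP lblA 0 j (0::S) mB) := by
    simp only [specC, List.length_cons, Nat.add_sub_cancel] at hspec
    omega
  have hall := countP_imp_all himp hcnt
  have hnotB : ¬ specP lblA 0 j (0::S) mB e0 = true := by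
    simp only [specP, Bool.and_eq_true, decide_eq_true_eq]
    rintro ⟨⟨-, h2⟩, -⟩
    omega
  have hnotA : ¬ specP lblA 0 j (0::S) mA e0 = true :=
    fun h => hnotB (hall e0 (List.mem_range.2 he0lt) h)
  have hw : ¬ ∀ i, i < j → (0::S).getD e0 0 ≤ i → ((0:ℕ):ℤ) + e0 - 1 ≤ lblA i := by
    intro hforall
    exact hnotA (by
      simp only [specP, Bool.and_eq_true, decide_eq_true_eq]
      exact ⟨⟨by omega, by push_cast; omega⟩, hforall⟩)
  push_neg at hw
  obtain ⟨i, hij, hpre, hlbl⟩ := hw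
  have he0s : e0 = mB.toNat + 1 := by omega
  rw [he0s, List.getD_cons_succ] at hpre
  have hes := estar_T TB 0 0 (fun t => (leavesOf TB).getD t 0) (fun t ht => by simp)
    hCB j hj mB.toNat (by rw [← hmB]; omega) i (by rw [hSent]; exact hpre) (by omega)
  rw [← hAB i hij] at hes
  push_cast at hlbl hes
  omega

theorem labels_eq (T1 T2 : PTree) (hC1 : Cond T1 0) (hC2 : Cond T2 0)
    (hfst : (linfoT T1 0).map Prod.fst = (linfoT T2 0).map Prod.fst)
    (hn : leafCount T1 = leafCount T2)
    (hch : chargeList T1 0 = chargeList T2 0) :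
    leavesOf T1 = leavesOf T2 := by
  have main : ∀ j, j < leafCount T1 → (leavesOf T1).getD j 0 = (leavesOf T2).getD j 0 := by
    intro j
    induction j using Nat.strong_induction_on with
    | _ j ih =>
    intro hj
    by_contra hne
    have hj2 : j < leafCount T2 := by omega
    have hAB : ∀ i, i < j → (leavesOf T1).getD i 0 = (leavesOf T2).getD i 0 :=
      fun i hi => ih i hi (by omega)
    have hfst_j : ((linfoT T2 0).getD j ([],0)).1 = ((linfoT T1 0).getD j ([],0)).1 := by
      have h1 : j < (linfoT T1 0).length := by rw [len_linfoT]; exact hj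
      have h2 : j < (linfoT T2 0).length := by rw [len_linfoT]; exact hj2
      rw [List.getD_eq_getElem _ _ h1, List.getD_eq_getElem _ _ h2]
      have e1 : ((linfoT T1 0).map Prod.fst)[j]'(by simpa using h1) = (linfoT T1 0)[j].1 :=
        List.getElem_map _
      have e2 : ((linfoT T2 0).map Prod.fst)[j]'(by simpa using h2) = (linfoT T2 0)[j].1 :=
        List.getElem_map _
      rw [← e1, ← e2]
      exact (List.getElem_of_eq hfst (by simpa using h1)).symm
    have hchj : (chargeList T1 0).getD j 0 = (chargeList T2 0).getD j 0 := by rw [hch]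
    have hs1 := chargeList_spec T1 0 0 (fun i => (leavesOf T1).getD i 0)
      (fun i hi => by simp) j hj
    have hs2 := chargeList_spec T2 0 0 (fun i => (leavesOf T2).getD i 0)
      (fun i hi => by simp) j hj2
    rw [snd_entry T1 0 j hj] at hs1
    rw [snd_entry T2 0 j hj2, hfst_j] at hs2
    simp only [Nat.zero_add] at hs1 hs2
    have hcongr := specC_congr (fun i => (leavesOf T2).getD i 0)
      (fun i => (leavesOf T1).getD i 0) 0 j
      (0 :: ((linfoT T1 0).getD j ([],0)).1) ((leavesOf T2).getD j 0)
      (fun i hi => (hAB i hi).symm)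
    rw [hcongr] at hs2
    rw [hs1, hs2] at hchj
    rcases lt_or_gt_of_ne hne with hlt | hlt
    · exact key T2 hC2 j hj2 _ hfst_j (fun i => (leavesOf T1).getD i 0) hAB
        ((leavesOf T1).getD j 0) (bound_T T1 0 0 hC1 j hj).1 hlt hchj
    · have hcongr2 := specC_congr (fun i => (leavesOf T1).getD i 0)
        (fun i => (leavesOf T2).getD i 0) 0 j
        (0 :: ((linfoT T1 0).getD j ([],0)).1) ((leavesOf T1).getD j 0)
        (fun i hi => hAB i hi)
      have hcongr3 := specC_congr (fun i => (leavesOf T1).getD i 0)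
        (fun i => (leavesOf T2).getD i 0) 0 j
        (0 :: ((linfoT T1 0).getD j ([],0)).1) ((leavesOf T2).getD j 0)
        (fun i hi => hAB i hi)
      refine key T1 hC1 j hj _ rfl (fun i => (leavesOf T2).getD i 0)
        (fun i hi => (hAB i hi).symm) ((leavesOf T2).getD j 0)
        (bound_T T2 0 0 hC2 j hj2).1 hlt ?_
      rw [← hcongr3, ← hchj, hcongr2]
  apply List.ext_getElem hn
  intro i h1 h2
  have := main i h1
  rwa [List.getD_eq_getElem _ _ h1, List.getD_eq_getElem _ _ h2] at this
/-- The map `T ↦ [P(T), Q(T)]` on decorated trees is injective. -/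
theorem Pword_Qword_injective (T1 T2 : PTree)
    (h1 : IsDecorated T1) (h2 : IsDecorated T2)
    (hP : Pword T1 = Pword T2) (hQ : Qword T1 = Qword T2) :
    T1 = T2 := by
  obtain ⟨⟨cs1, rfl⟩, hC1⟩ := h1
  obtain ⟨⟨cs2, rfl⟩, hC2⟩ := h2
  have hCc1 : ∀ c ∈ cs1, Cond c 1 := by
    simp only [Cond] at hC1; exact fun c hc => hC1.2.2 c hc
  have hCc2 : ∀ c ∈ cs2, Cond c 1 := by
    simp only [Cond] at hC2; exact fun c hc => hC2.2.2 c hc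
  -- handle empty roots
  cases cs1 with
  | nil =>
    cases cs2 with
    | nil => rfl
    | cons c cs => rw [Qword, Qword] at hQ; simp at hQ
  | cons c1 cs1' =>
    cases cs2 with
    | nil => rw [Qword, Qword] at hQ; simp at hQ
    | cons c2 cs2' =>
      have hp1 : Proper (.node (c1 :: cs1')) :=
        .node _ (by simp) (fun c hc => proper_of_cond c 1 le_rfl (hCc1 c hc))
      have hp2 : Proper (.node (c2 :: cs2')) :=
        .node _ (by simp) (fun c hc => proper_of_cond c 1 le_rfl (hCc2 c hc))
      have hSS := Q_inj _ _ hp1 hp2 hQ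
      have hn := hSS.leafCount_eq
      have hl1 : (chargeList (.node (c1 :: cs1')) 0).length = leafCount (.node (c1 :: cs1')) :=
        len_chargeList _ 0
      have hl2 : (chargeList (.node (c2 :: cs2')) 0).length = leafCount (.node (c2 :: cs2')) :=
        len_chargeList _ 0
      have hP' : (buildP (.node (c1 :: cs1')) (chargeList (.node (c1 :: cs1')) 0)).1 ++ [] =
          (buildP (.node (c2 :: cs2')) (chargeList (.node (c2 :: cs2')) 0)).1 ++ [] := by
        simpa [Pword] using hP
      obtain ⟨htake, -⟩ := buildP_inj hSS _ _ [] [] (by omega) (by omega)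
        headOK_nil headOK_nil hP'
      rw [← hl1, ← hn, ← hl1] at htake
      rw [List.take_length] at htake
      have hch : chargeList (.node (c1 :: cs1')) 0 = chargeList (.node (c2 :: cs2')) 0 := by
        rw [htake]
        rw [show (chargeList (.node (c1 :: cs1')) 0).length =
          (chargeList (.node (c2 :: cs2')) 0).length from by omega]
        rw [List.take_length]
      exact hSS.eq_of_leaves (labels_eq _ _ hC1 hC2 (hSS.linfo_fst 0) hn hch)
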